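/- Let n be a positive integer, let f : ℝ^n → ℝ be twice continuously differentiable, let x ∈ ℝ^n, δ > 0, and suppose the operator norm of the second derivative of f is bounded by M ≥ 0 on the closed ball of radius δ·√n centered at x. Then for every i ∈ {1,…,n}: | (1/2^n) · Σ_{Δ ∈ {−1,1}^n} (f(x + δΔ) − f(x))/(δΔ_i) − (∂f/∂x_i)(x) | ≤ (M · n · δ)/2. In particular, as δ → 0 the expected simultaneous-perturbation estimate converges to the partial derivative ∂f/∂x_i(x). -/

import Mathlib

/-- The sign vector `Δ ∈ {−1,1}^n` (as an element of Euclidean space, so that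
`‖δ • Δ‖ = δ√n`) associated with a Boolean pattern: `1` for `true`, `-1` for `false`.
Summing over all `s : Fin n → Bool` enumerates all sign vectors. -/
noncomputable def signVecE (n : ℕ) (s : Fin n → Bool) : EuclideanSpace ℝ (Fin n) :=
  (WithLp.equiv 2 (Fin n → ℝ)).symm fun j => if s j then 1 else -1

open intervalIntegral in
/-- Second-order Taylor bound: if the second derivative is bounded by `M` on the closed
ball of radius `r` around `x`, then `|f(x+v) − f(x) − f'(x)v| ≤ M‖v‖²/2` for `‖v‖ ≤ r`. -/
lemma taylor_aux {E : Type*} [NormedAddCommGroup E] [NormedSpace ℝ E]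
    (f : E → ℝ) (hf : ContDiff ℝ 2 f) (x : E) (r M : ℝ) (hM : 0 ≤ M)
    (hbound : ∀ y ∈ Metric.closedBall x r, ‖iteratedFDeriv ℝ 2 f y‖ ≤ M)
    (v : E) (hv : ‖v‖ ≤ r) :
    |f (x + v) - f x - fderiv ℝ f x v| ≤ M * ‖v‖ ^ 2 / 2 := by
  have hd : Differentiable ℝ f := hf.differentiable two_ne_zero
  have hD1 : ContDiff ℝ 1 (fderiv ℝ f) := hf.fderiv_right (by norm_num)
  have hc' : Continuous (fderiv ℝ f) := hD1.continuous
  -- operator norm bound on fderiv (fderiv f)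
  have h2 : ∀ y ∈ Metric.closedBall x r, ‖fderiv ℝ (fderiv ℝ f) y‖ ≤ M := by
    intro y hy
    refine ContinuousLinearMap.opNorm_le_bound _ hM fun a => ?_
    refine ContinuousLinearMap.opNorm_le_bound _ (mul_nonneg hM (norm_nonneg a)) fun b => ?_
    have : fderiv ℝ (fderiv ℝ f) y a b = iteratedFDeriv ℝ 2 f y ![a, b] := by
      rw [iteratedFDeriv_two_apply]
      simp
    rw [this]
    calc ‖iteratedFDeriv ℝ 2 f y ![a, b]‖ ≤ ‖iteratedFDeriv ℝ 2 f y‖ * ∏ j, ‖![a, b] j‖ :=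
          (iteratedFDeriv ℝ 2 f y).le_opNorm _
      _ ≤ M * (‖a‖ * ‖b‖) := by
          rw [Fin.prod_univ_two]
          show ‖iteratedFDeriv ℝ 2 f y‖ * (‖a‖ * ‖b‖) ≤ M * (‖a‖ * ‖b‖)
          exact mul_le_mul_of_nonneg_right (hbound y hy) (by positivity)
      _ = M * ‖a‖ * ‖b‖ := by ring
  -- Lipschitz bound for fderiv on the ball
  have hlip : ∀ y ∈ Metric.closedBall x r, ‖fderiv ℝ f y - fderiv ℝ f x‖ ≤ M * ‖y - x‖ := by
    intro y hy
    have hx0 : x ∈ Metric.closedBall x r := Metric.mem_closedBall_self ((norm_nonneg v).trans hv)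
    exact (convex_closedBall x r).norm_image_sub_le_of_norm_fderiv_le
      (fun z _ => (hD1.differentiable one_ne_zero) z) h2 hx0 hy
  -- derivative of t ↦ f (x + t • v)
  have hderiv : ∀ t : ℝ, HasDerivAt (fun t : ℝ => f (x + t • v)) (fderiv ℝ f (x + t • v) v) t := by
    intro t
    have h1 : HasDerivAt (fun t : ℝ => x + t • v) v t := by
      simpa using ((hasDerivAt_id t).smul_const v).const_add x
    exact (hd (x + t • v)).hasFDerivAt.comp_hasDerivAt t h1
  have hcont : Continuous fun t : ℝ => fderiv ℝ f (x + t • v) v := by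
    exact ((hc'.comp (by continuity)).clm_apply continuous_const)
  have hint : f (x + v) - f x = ∫ t in (0:ℝ)..1, fderiv ℝ f (x + t • v) v := by
    have := intervalIntegral.integral_eq_sub_of_hasDerivAt
      (f := fun t : ℝ => f (x + t • v)) (fun t _ => hderiv t)
      (hcont.intervalIntegrable 0 1)
    simp only [one_smul, zero_smul, add_zero] at this
    rw [this]
  have hmem : ∀ t : ℝ, t ∈ Set.Ioc (0:ℝ) 1 → x + t • v ∈ Metric.closedBall x r := by
    intro t ht
    rw [Metric.mem_closedBall, dist_eq_norm]
    simp only [add_sub_cancel_left, norm_smul, Real.norm_eq_abs]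
    calc |t| * ‖v‖ ≤ 1 * ‖v‖ := by
          gcongr
          rw [abs_le]; constructor <;> [linarith [ht.1]; exact ht.2]
      _ = ‖v‖ := one_mul _
      _ ≤ r := hv
  have key : f (x + v) - f x - fderiv ℝ f x v
      = ∫ t in (0:ℝ)..1, (fderiv ℝ f (x + t • v) v - fderiv ℝ f x v) := by
    rw [intervalIntegral.integral_sub (hcont.intervalIntegrable 0 1)
      (intervalIntegrable_const), intervalIntegral.integral_const, hint]
    simp
  rw [key, ← Real.norm_eq_abs]
  have hb : ∀ᵐ t ∂(MeasureTheory.volume.restrict (Set.uIoc (0:ℝ) 1)),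
      ‖fderiv ℝ f (x + t • v) v - fderiv ℝ f x v‖ ≤ M * ‖v‖ ^ 2 * t := by
    refine (MeasureTheory.ae_restrict_iff' measurableSet_uIoc).2 (MeasureTheory.ae_of_all _ ?_)
    intro t ht
    rw [Set.uIoc_of_le zero_le_one] at ht
    have h1 : ‖fderiv ℝ f (x + t • v) v - fderiv ℝ f x v‖
        ≤ ‖fderiv ℝ f (x + t • v) - fderiv ℝ f x‖ * ‖v‖ := by
      rw [← ContinuousLinearMap.sub_apply]
      exact (fderiv ℝ f (x + t • v) - fderiv ℝ f x).le_opNorm v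
    have h2' := hlip _ (hmem t ht)
    have h3 : ‖x + t • v - x‖ = t * ‖v‖ := by
      simp [norm_smul, Real.norm_eq_abs, abs_of_pos ht.1]
    calc ‖fderiv ℝ f (x + t • v) v - fderiv ℝ f x v‖
        ≤ ‖fderiv ℝ f (x + t • v) - fderiv ℝ f x‖ * ‖v‖ := h1
      _ ≤ (M * ‖x + t • v - x‖) * ‖v‖ := mul_le_mul_of_nonneg_right h2' (norm_nonneg v)
      _ = M * ‖v‖ ^ 2 * t := by rw [h3]; ring
  have := intervalIntegral.norm_integral_le_of_norm_le (g := fun t => M * ‖v‖ ^ 2 * t) zero_le_one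
    (by simpa only [Set.uIoc_of_le zero_le_one] using (MeasureTheory.ae_restrict_iff' measurableSet_uIoc).1 hb)
    (((continuous_const.mul continuous_id).intervalIntegrable 0 1))
  refine this.trans ?_
  have : (∫ t in (0:ℝ)..1, M * ‖v‖ ^ 2 * t) = M * ‖v‖ ^ 2 * ((1:ℝ)^2 - 0^2)/2 := by
    rw [intervalIntegral.integral_const_mul, integral_id]
    ring
  rw [this]
  nlinarith [sq_nonneg ‖v‖]

/-- For `i ≠ j`, the products of sign coordinates cancel when summed over all sign vectors. -/
lemma eps_sum_cancel (n : ℕ) (i j : Fin n) (hij : i ≠ j) :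
    ∑ s : Fin n → Bool, (if s i then (1:ℝ) else -1) * (if s j then (1:ℝ) else -1) = 0 := by
  set F : (Fin n → Bool) → ℝ :=
    fun s => (if s i then (1:ℝ) else -1) * (if s j then (1:ℝ) else -1) with hF
  have hinv : Function.Involutive (fun s : Fin n → Bool => Function.update s j (!s j)) := by
    intro s; funext k
    by_cases h : k = j <;> simp [Function.update, h]
  set e : (Fin n → Bool) ≃ (Fin n → Bool) := hinv.toPerm _ with he
  have h1 : ∀ s, F (e s) = -F s := by
    intro s
    have hi : (e s) i = s i := by
      simp [he, Function.Involutive.toPerm, Function.update, hij]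
    have hj : (e s) j = !s j := by
      simp [he, Function.Involutive.toPerm, Function.update]
    simp only [hF, hi, hj]
    cases s j <;> cases s i <;> norm_num
  have h2 : ∑ s, F (e s) = ∑ s, F s := Equiv.sum_comp e F
  have h3 : ∑ s, F (e s) = -∑ s, F s := by
    rw [Finset.sum_congr rfl fun s _ => h1 s, Finset.sum_neg_distrib]
  linarith [h2.symm.trans h3]

lemma signVecE_repr (n : ℕ) (s : Fin n → Bool) :
    signVecE n s = ∑ j, (if s j then (1:ℝ) else -1) • EuclideanSpace.single j (1:ℝ) := by
  have h := ((EuclideanSpace.basisFun (Fin n) ℝ).toBasis.sum_repr (signVecE n s)).symm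
  simp only [OrthonormalBasis.coe_toBasis_repr_apply, EuclideanSpace.basisFun_repr,
    OrthonormalBasis.coe_toBasis, EuclideanSpace.basisFun_apply] at h
  convert h using 2
  rfl

lemma signVecE_norm (n : ℕ) (s : Fin n → Bool) : ‖signVecE n s‖ = Real.sqrt n := by
  rw [EuclideanSpace.norm_eq]
  congr 1
  rw [Finset.sum_congr rfl (fun j _ => show ‖signVecE n s j‖ ^ 2 = 1 by
    by_cases h : s j <;> simp [signVecE, h])]
  simp

/-- For `f` twice continuously differentiable with second derivative bounded
in operator norm by `M` on the closed ball of radius `δ√n` around `x`, the expected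
simultaneous-perturbation estimate `(f(x+δΔ)−f(x))/(δΔ_i)` differs from `∂f/∂x_i(x)` by at
most `M n δ / 2`. -/
theorem stmt_11 (n : ℕ) (hn : 0 < n) (f : EuclideanSpace ℝ (Fin n) → ℝ)
    (hf : ContDiff ℝ 2 f) (x : EuclideanSpace ℝ (Fin n)) (δ : ℝ) (hδ : 0 < δ)
    (M : ℝ) (hM : 0 ≤ M)
    (hbound : ∀ y ∈ Metric.closedBall x (δ * Real.sqrt n),
      ‖iteratedFDeriv ℝ 2 f y‖ ≤ M) :
    ∀ i : Fin n,
      |(1 / 2 ^ n : ℝ) *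
          (∑ s : Fin n → Bool,
            (f (x + δ • signVecE n s) - f x) / (δ * (if s i then (1 : ℝ) else -1))) -
        fderiv ℝ f x (EuclideanSpace.single i 1)| ≤ M * n * δ / 2 := by
  intro i
  have hnR : (0:ℝ) ≤ n := Nat.cast_nonneg n
  have hsq : Real.sqrt n * Real.sqrt n = n := Real.mul_self_sqrt hnR
  set D := fderiv ℝ f x with hD
  set ε : (Fin n → Bool) → Fin n → ℝ := fun s j => if s j then (1:ℝ) else -1 with hε
  set c : Fin n → ℝ := fun j => D (EuclideanSpace.single j 1) with hc
  set L : (Fin n → Bool) → ℝ := fun s => ∑ j, ε s j * c j with hL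
  have hDΔ : ∀ s, D (signVecE n s) = L s := by
    intro s
    rw [signVecE_repr n s, map_sum]
    simp only [hL, hε, hc, map_smul, smul_eq_mul]
  -- Taylor bound per sign vector
  have hT : ∀ s, |f (x + δ • signVecE n s) - f x - δ * L s| ≤ M * n * δ ^ 2 / 2 := by
    intro s
    have h1 : ‖δ • signVecE n s‖ = δ * Real.sqrt n := by
      rw [norm_smul, Real.norm_eq_abs, abs_of_pos hδ, signVecE_norm]
    have h2 := taylor_aux f hf x (δ * Real.sqrt n) M hM hbound (δ • signVecE n s) h1.le
    rw [map_smul, smul_eq_mul, hDΔ s, h1] at h2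
    have h3 : (δ * Real.sqrt n) ^ 2 = n * δ ^ 2 := by
      rw [mul_pow, sq (Real.sqrt n), hsq]; ring
    rw [h3] at h2
    calc |f (x + δ • signVecE n s) - f x - δ * L s| ≤ M * (n * δ ^ 2) / 2 := h2
      _ = M * n * δ ^ 2 / 2 := by ring
  -- per-term bound
  have hterm : ∀ s : Fin n → Bool,
      |(f (x + δ • signVecE n s) - f x) / (δ * ε s i) - ε s i * L s| ≤ M * n * δ / 2 := by
    intro s
    have hTs := hT s
    by_cases h : s i
    · have hεi : ε s i = 1 := by simp [hε, h]
      rw [hεi, mul_one, one_mul]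
      have heq : (f (x + δ • signVecE n s) - f x) / δ - L s
          = (f (x + δ • signVecE n s) - f x - δ * L s) / δ := by
        field_simp
      rw [heq, abs_div, abs_of_pos hδ, div_le_iff₀ hδ]
      calc |f (x + δ • signVecE n s) - f x - δ * L s| ≤ M * n * δ ^ 2 / 2 := hTs
        _ = M * n * δ / 2 * δ := by ring
    · have hεi : ε s i = -1 := by simp [hε, h]
      rw [hεi]
      have hδ0 : δ ≠ 0 := hδ.ne'
      have heq : (f (x + δ • signVecE n s) - f x) / (δ * (-1)) - (-1) * L s
          = -((f (x + δ • signVecE n s) - f x - δ * L s) / δ) := by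
        rw [mul_neg_one, div_neg]
        field_simp
        ring
      rw [heq, abs_neg, abs_div, abs_of_pos hδ, div_le_iff₀ hδ]
      calc |f (x + δ • signVecE n s) - f x - δ * L s| ≤ M * n * δ ^ 2 / 2 := hTs
        _ = M * n * δ / 2 * δ := by ring
  -- the average of the linear parts is exactly c i
  have hbil : (1 / 2 ^ n : ℝ) * ∑ s : Fin n → Bool, ε s i * L s = c i := by
    have hswap : ∑ s : Fin n → Bool, ε s i * L s
        = ∑ j, (∑ s : Fin n → Bool, ε s i * ε s j) * c j := by
      simp only [hL, Finset.mul_sum]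
      rw [Finset.sum_comm]
      refine Finset.sum_congr rfl fun j _ => ?_
      rw [Finset.sum_mul]
      exact Finset.sum_congr rfl fun s _ => by ring
    have hdiag : ∀ j, (∑ s : Fin n → Bool, ε s i * ε s j) = if i = j then (2 ^ n : ℝ) else 0 := by
      intro j
      by_cases h : i = j
      · subst h
        rw [if_pos rfl,
          Finset.sum_congr rfl fun s _ => show ε s i * ε s i = (1:ℝ) by
            by_cases hs : s i <;> simp [hε, hs]]
        simp [Finset.card_univ]
      · rw [if_neg h]
        exact eps_sum_cancel n i j h
    rw [hswap, Finset.sum_congr rfl fun j _ => by rw [hdiag j]]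
    simp only [ite_mul, zero_mul, Finset.sum_ite_eq, Finset.mem_univ, if_pos]
    field_simp
  -- conclude
  show |(1 / 2 ^ n : ℝ) *
      (∑ s : Fin n → Bool, (f (x + δ • signVecE n s) - f x) / (δ * ε s i)) - c i| ≤ M * ↑n * δ / 2
  have hgoal : (1 / 2 ^ n : ℝ) *
        (∑ s : Fin n → Bool, (f (x + δ • signVecE n s) - f x) / (δ * ε s i)) - c i
      = (1 / 2 ^ n : ℝ) * ∑ s : Fin n → Bool,
          ((f (x + δ • signVecE n s) - f x) / (δ * ε s i) - ε s i * L s) := by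
    rw [Finset.sum_sub_distrib, mul_sub, hbil]
  rw [hgoal]
  have hpos : (0:ℝ) < 1 / 2 ^ n := by positivity
  calc |(1 / 2 ^ n : ℝ) * ∑ s : Fin n → Bool,
          ((f (x + δ • signVecE n s) - f x) / (δ * ε s i) - ε s i * L s)|
      ≤ (1 / 2 ^ n : ℝ) * ∑ s : Fin n → Bool,
          |(f (x + δ • signVecE n s) - f x) / (δ * ε s i) - ε s i * L s| := by
        rw [abs_mul, abs_of_pos hpos]
        exact mul_le_mul_of_nonneg_left (Finset.abs_sum_le_sum_abs _ _) hpos.le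
    _ ≤ (1 / 2 ^ n : ℝ) * ∑ _s : Fin n → Bool, (M * ↑n * δ / 2) :=
        mul_le_mul_of_nonneg_left (Finset.sum_le_sum fun s _ => hterm s) hpos.le
    _ = M * ↑n * δ / 2 := by
        rw [Finset.sum_const, nsmul_eq_mul]
        simp only [Finset.card_univ, Fintype.card_fun, Fintype.card_bool, Fintype.card_fin]
        push_cast
        field_simp
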